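/- Let 𝔤 be an s-step nilpotent Lie algebra with asymptotic grading (V_i)_{i=1}^s and dilations δ_ε. Define for ε ≠ 0 the bracket [x,y]^{(ε)} := δ_ε[δ_ε^{-1}x, δ_ε^{-1}y]. Then [x,y]^{(ε)} is polynomial in ε and its value at ε = 0 satisfies [v,w]^{(0)} = ([v,w])_{i+j} for v ∈ V_i, w ∈ V_j, where (·)_k is the projection onto V_k; in particular [·,·]^{(0)} is the associated graded (Carnot) bracket. -/

import Mathlib

/-- The span of brackets `⁅a,b⁆` with `a ∈ A`, `b ∈ B`. -/
def sbr {L : Type*} [LieRing L] [LieAlgebra ℝ L] (A B : Submodule ℝ L) : Submodule ℝ L :=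
  Submodule.span ℝ {x : L | ∃ a ∈ A, ∃ b ∈ B, x = ⁅a, b⁆}

/-- `Δpow Δ k = Δ^k`, the left-iterated bracket `[Δ,…,Δ]` (`k` factors); `Δ^0 := ⊥`. -/
def Δpow {L : Type*} [LieRing L] [LieAlgebra ℝ L] (Δ : Submodule ℝ L) : ℕ → Submodule ℝ L
  | 0 => ⊥
  | 1 => Δ
  | (k+2) => sbr Δ (Δpow Δ (k+1))

/-- `ΔB Δ j = Δ^{[j]} = Σ_{i=1}^j Δ^i`. -/
def ΔB {L : Type*} [LieRing L] [LieAlgebra ℝ L] (Δ : Submodule ℝ L) (j : ℕ) : Submodule ℝ L :=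
  ⨆ i ∈ Finset.Icc 1 j, Δpow Δ i

/-- Lower central series, indexed so that `lcs L 1 = 𝔤`, `lcs L (j+1) = [𝔤, lcs L j]`. -/
def lcs (L : Type*) [LieRing L] [LieAlgebra ℝ L] : ℕ → Submodule ℝ L
  | 0 => ⊤
  | 1 => ⊤
  | (j+2) => sbr ⊤ (lcs L (j+1))



lemma sbr_mem' {L : Type*} [LieRing L] [LieAlgebra ℝ L] {A B : Submodule ℝ L} {a b : L}
    (ha : a ∈ A) (hb : b ∈ B) : ⁅a, b⁆ ∈ sbr A B :=
  Submodule.subset_span ⟨a, ha, b, hb, rfl⟩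

lemma sbr_bot' {L : Type*} [LieRing L] [LieAlgebra ℝ L] (A : Submodule ℝ L) :
    sbr A ⊥ = ⊥ := by
  rw [eq_bot_iff]
  apply Submodule.span_le.mpr
  rintro x ⟨a, -, b, hb, rfl⟩
  simp only [Submodule.mem_bot] at hb
  simp [hb]

lemma lcs_succ_eq (L : Type*) [LieRing L] [LieAlgebra ℝ L] {j : ℕ} (hj : 1 ≤ j) :
    lcs L (j+1) = sbr ⊤ (lcs L j) := by
  cases j with
  | zero => omega
  | succ k => rfl

lemma bracket_mem_lcs' {L : Type*} [LieRing L] [LieAlgebra ℝ L] :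
    ∀ (j i : ℕ), 1 ≤ i → ∀ a ∈ lcs L i, ∀ b ∈ lcs L (j+1), ⁅a, b⁆ ∈ lcs L (i+(j+1)) := by
  intro j
  induction j with
  | zero =>
    intro i hi a ha b _
    show ⁅a, b⁆ ∈ lcs L (i+1)
    rw [lcs_succ_eq L hi, ← lie_skew]
    exact neg_mem (sbr_mem' trivial ha)
  | succ k ih =>
    intro i hi a ha b hb
    have hb' : b ∈ Submodule.span ℝ
        {x : L | ∃ t ∈ (⊤ : Submodule ℝ L), ∃ c ∈ lcs L (k+1), x = ⁅t, c⁆} := hb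
    refine Submodule.span_induction ?_ ?_ ?_ ?_ hb'
    · rintro x ⟨t, -, c, hc, rfl⟩
      rw [leibniz_lie]
      apply add_mem
      · have h1 : ⁅a, t⁆ ∈ lcs L (i+1) := by
          rw [lcs_succ_eq L hi, ← lie_skew]
          exact neg_mem (sbr_mem' trivial ha)
        have h2 := ih (i+1) (by omega) _ h1 c hc
        have he : i + 1 + (k+1) = i + (k+1+1) := by omega
        rwa [he] at h2
      · have h2 := ih i hi a ha c hc
        have he : i + (k+1+1) = (i + (k+1)) + 1 := by omega
        rw [he, lcs_succ_eq L (by omega)]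
        exact sbr_mem' trivial h2
    · simp
    · intro x y _ _ hx hy
      rw [lie_add]; exact add_mem hx hy
    · intro r x _ hx
      rw [lie_smul]; exact Submodule.smul_mem _ _ hx

lemma bracket_mem_lcs {L : Type*} [LieRing L] [LieAlgebra ℝ L] {i j : ℕ}
    (hi : 1 ≤ i) (hj : 1 ≤ j) {a b : L} (ha : a ∈ lcs L i) (hb : b ∈ lcs L j) :
    ⁅a, b⁆ ∈ lcs L (i+j) := by
  obtain ⟨k, rfl⟩ : ∃ k, j = k + 1 := ⟨j - 1, by omega⟩
  exact bracket_mem_lcs' k i hi a ha b hb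

lemma sum_lie' {L : Type*} [LieRing L] [LieAlgebra ℝ L] {α : Type*} (t : Finset α)
    (f : α → L) (b : L) : ⁅∑ i ∈ t, f i, b⁆ = ∑ i ∈ t, ⁅f i, b⁆ := by
  have : ∀ z : L, ⁅z, b⁆ = (LinearMap.mk₂ ℝ (fun a b : L => ⁅a, b⁆) add_lie smul_lie lie_add lie_smul).flip b z := fun _ => rfl
  rw [this, map_sum]
  exact Finset.sum_congr rfl fun i _ => (this (f i)).symm

lemma lie_sum' {L : Type*} [LieRing L] [LieAlgebra ℝ L] {α : Type*} (t : Finset α)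
    (f : α → L) (a : L) : ⁅a, ∑ i ∈ t, f i⁆ = ∑ i ∈ t, ⁅a, f i⁆ := by
  have : ∀ z : L, ⁅a, z⁆ = (LieAlgebra.ad ℝ L) a z := fun _ => rfl
  rw [this, map_sum]
  exact Finset.sum_congr rfl fun i _ => (this (f i)).symm

/-- for an asymptotic grading `(V i)_{i=1}^s` of an `s`-step nilpotent Lie
algebra with dilations `δ ε`, the rescaled brackets `[x,y]^{(ε)} = δ_ε ⁅δ_ε⁻¹ x, δ_ε⁻¹ y⁆`
(for `ε ≠ 0`) are polynomial in `ε`, hence extend to `ε = 0`, and the value at `0` is the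
associated graded (Carnot) bracket: `[v,w]^{(0)} = (⁅v,w⁆)_{i+j}` for `v ∈ V i`, `w ∈ V j`. -/
theorem stmt9 {L : Type*} [LieRing L] [LieAlgebra ℝ L] [FiniteDimensional ℝ L]
    (s : ℕ) (hs : 1 ≤ s)
    (hnil : lcs L (s+1) = ⊥) (hstep : lcs L s ≠ ⊥)
    (V : ℕ → Submodule ℝ L)
    (hV0 : ∀ j, j ∉ Finset.Icc 1 s → V j = ⊥)
    (hgrad : ∀ j ∈ Finset.Icc 1 s,
      lcs L j = V j ⊔ lcs L (j+1) ∧ V j ⊓ lcs L (j+1) = ⊥)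
    (δ : ℝ → L →ₗ[ℝ] L)
    (hδ : ∀ (ε : ℝ), ∀ j ∈ Finset.Icc 1 s, ∀ x ∈ V j, δ ε x = ε ^ j • x)
    (π : ℕ → L →ₗ[ℝ] L)
    (hπmem : ∀ j x, π j x ∈ V j)
    (hπsum : ∀ x : L, (∑ j ∈ Finset.Icc 1 s, π j x) = x)
    (hπid : ∀ j, ∀ x ∈ V j, π j x = x) :
    ∃ B : ℝ → L →ₗ[ℝ] L →ₗ[ℝ] L,
      (∀ ε : ℝ, ε ≠ 0 → ∀ x y : L, B ε x y = δ ε ⁅δ (1/ε) x, δ (1/ε) y⁆) ∧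
      (∀ x y : L, ∃ (N : ℕ) (c : ℕ → L),
        ∀ ε : ℝ, B ε x y = ∑ i ∈ Finset.range N, ε ^ i • c i) ∧
      (∀ i ∈ Finset.Icc 1 s, ∀ j ∈ Finset.Icc 1 s, ∀ v ∈ V i, ∀ w ∈ V j,
        B 0 v w = π (i + j) ⁅v, w⁆) := by
  classical
  have hlcs_bot : ∀ m, s + 1 ≤ m → lcs L m = ⊥ := by
    intro m hm
    induction m with
    | zero => omega
    | succ k ih =>
      rcases Nat.lt_or_ge (s+1) (k+1) with h | h
      · rw [lcs_succ_eq L (by omega : 1 ≤ k), ih (by omega), sbr_bot']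
      · have : k + 1 = s + 1 := by omega
        rw [this]; exact hnil
  have hVle : ∀ j, 1 ≤ j → V j ≤ lcs L j := by
    intro j hj
    by_cases hjs : j ∈ Finset.Icc 1 s
    · rw [(hgrad j hjs).1]; exact le_sup_left
    · rw [hV0 j hjs]; exact bot_le
  have hanti : ∀ j, 1 ≤ j → lcs L (j+1) ≤ lcs L j := by
    intro j hj
    by_cases hjs : j ∈ Finset.Icc 1 s
    · rw [(hgrad j hjs).1]; exact le_sup_right
    · simp only [Finset.mem_Icc, not_and, not_le] at hjs
      rw [hlcs_bot (j+1) (by omega)]; exact bot_le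
  have hmono : ∀ m k, 1 ≤ m → m ≤ k → lcs L k ≤ lcs L m := by
    intro m k hm hmk
    induction k, hmk using Nat.le_induction with
    | base => exact le_rfl
    | succ n hn ih => exact le_trans (hanti n (by omega)) ih
  have hVlcs : ∀ m k, 1 ≤ m → m ≤ k → V k ≤ lcs L m := fun m k hm hmk =>
    le_trans (hVle k (by omega)) (hmono m k hm hmk)
  -- independence of the V k
  have hindep : ∀ (t m : ℕ), 1 ≤ m → s + 1 - m ≤ t → ∀ (v : ℕ → L), (∀ k, v k ∈ V k) →
      (∑ k ∈ Finset.Icc m s, v k) = 0 → ∀ k ∈ Finset.Icc m s, v k = 0 := by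
    intro t
    induction t with
    | zero =>
      intro m hm hsm v hv hsum k hk
      simp only [Finset.mem_Icc] at hk; omega
    | succ n ih =>
      intro m hm hsm v hv hsum k hk
      rcases Nat.lt_or_ge s m with h | h
      · simp only [Finset.mem_Icc] at hk; omega
      · have hsplit : Finset.Icc m s = insert m (Finset.Icc (m+1) s) := by
          ext x; simp only [Finset.mem_Icc, Finset.mem_insert]; omega
        have hmem : m ∉ Finset.Icc (m+1) s := by simp [Finset.mem_Icc]
        rw [hsplit, Finset.sum_insert hmem] at hsum
        have hrest : (∑ k ∈ Finset.Icc (m+1) s, v k) ∈ lcs L (m+1) :=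
          Submodule.sum_mem _ (fun k hk' => by
            simp only [Finset.mem_Icc] at hk'
            exact hVlcs (m+1) k (by omega) hk'.1 (hv k))
        have hvm : v m = 0 := by
          have h1 : v m ∈ V m ⊓ lcs L (m+1) := by
            refine ⟨hv m, ?_⟩
            have hvme : v m = -(∑ k ∈ Finset.Icc (m+1) s, v k) :=
              eq_neg_of_add_eq_zero_left hsum
            rw [hvme]; exact neg_mem hrest
          rw [(hgrad m (by simp only [Finset.mem_Icc]; omega)).2] at h1
          simpa using h1
        have hsum' : (∑ k ∈ Finset.Icc (m+1) s, v k) = 0 := by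
          rw [hvm, zero_add] at hsum; exact hsum
        rcases eq_or_ne k m with rfl | hne
        · exact hvm
        · refine ih (m+1) (by omega) (by omega) v hv hsum' k ?_
          simp only [Finset.mem_Icc] at hk ⊢; omega
  -- projections kill other pieces
  have hπV : ∀ k l, l ≠ k → ∀ x ∈ V k, π l x = 0 := by
    intro k l hlk x hx
    by_cases hks : k ∈ Finset.Icc 1 s
    · by_cases hls : l ∈ Finset.Icc 1 s
      · set v : ℕ → L := fun n => π n x - (if n = k then x else 0) with hvdef
        have hv : ∀ n, v n ∈ V n := by
          intro n
          by_cases hn : n = k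
          · subst hn; simp only [v, if_pos rfl]; exact sub_mem (hπmem n x) hx
          · simp only [v, if_neg hn, sub_zero]; exact hπmem n x
        have hsum0 : (∑ n ∈ Finset.Icc 1 s, v n) = 0 := by
          simp only [v]
          rw [Finset.sum_sub_distrib, hπsum x, Finset.sum_ite_eq' (Finset.Icc 1 s) k fun _ => x,
            if_pos hks, sub_self]
        have hvl := hindep s 1 le_rfl (by omega) v hv hsum0 l hls
        simpa only [v, if_neg hlk, sub_zero] using hvl
      · have h1 := hπmem l x
        rw [hV0 l hls] at h1
        simpa using h1
    · rw [hV0 k hks, Submodule.mem_bot] at hx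
      rw [hx]; simp
  -- projections kill lower lcs pieces
  have hπlcs : ∀ t m, s + 1 - m ≤ t → ∀ x ∈ lcs L m, ∀ l, l < m → π l x = 0 := by
    intro t
    induction t with
    | zero =>
      intro m hm x hx l hl
      rw [hlcs_bot m (by omega), Submodule.mem_bot] at hx
      rw [hx]; simp
    | succ n ih =>
      intro m hm x hx l hl
      rcases Nat.lt_or_ge s m with h | h
      · rw [hlcs_bot m (by omega), Submodule.mem_bot] at hx
        rw [hx]; simp
      · rw [(hgrad m (by simp only [Finset.mem_Icc]; omega)).1] at hx
        obtain ⟨a, ha, b, hb, rfl⟩ := Submodule.mem_sup.mp hx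
        rw [map_add, hπV m l (by omega) a ha, ih (m+1) (by omega) b hb l (by omega), add_zero]
  have hπbr : ∀ i j, 1 ≤ i → 1 ≤ j → ∀ a ∈ V i, ∀ b ∈ V j, ∀ k, k < i + j → π k ⁅a, b⁆ = 0 := by
    intro i j hi hj a ha b hb k hk
    exact hπlcs (s+1) (i+j) (by omega)
      ⁅a, b⁆ (bracket_mem_lcs hi hj (hVle i hi ha) (hVle j hj hb)) k hk
  -- the bilinear maps
  set adB : L →ₗ[ℝ] L →ₗ[ℝ] L := (LinearMap.mk₂ ℝ (fun a b : L => ⁅a, b⁆) add_lie smul_lie lie_add lie_smul) with hadB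
  have hadB_apply : ∀ u v : L, adB u v = ⁅u, v⁆ := fun _ _ => rfl
  have hB : ∀ (ε : ℝ) (x y : L),
      (∑ i ∈ Finset.Icc 1 s, ∑ j ∈ Finset.Icc 1 s, ∑ k ∈ Finset.Icc 1 s,
        ε ^ (k - (i + j)) • ((adB.compl₁₂ (π i) (π j)).compr₂ (π k))) x y
      = ∑ i ∈ Finset.Icc 1 s, ∑ j ∈ Finset.Icc 1 s, ∑ k ∈ Finset.Icc 1 s,
        ε ^ (k - (i + j)) • π k ⁅π i x, π j y⁆ := by
    intro ε x y
    simp only [LinearMap.coe_sum, Finset.sum_apply, LinearMap.smul_apply,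
      LinearMap.compr₂_apply, LinearMap.compl₁₂_apply, hadB_apply]
  refine ⟨fun ε => ∑ i ∈ Finset.Icc 1 s, ∑ j ∈ Finset.Icc 1 s, ∑ k ∈ Finset.Icc 1 s,
      ε ^ (k - (i + j)) • ((adB.compl₁₂ (π i) (π j)).compr₂ (π k)), ?_, ?_, ?_⟩
  · -- equality with the rescaled bracket for ε ≠ 0
    intro ε hε x y
    rw [hB]
    have hδz : ∀ (μ : ℝ) (z : L), δ μ z = ∑ i ∈ Finset.Icc 1 s, μ^i • π i z := by
      intro μ z
      conv_lhs => rw [← hπsum z]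
      rw [map_sum]
      exact Finset.sum_congr rfl fun i hi => hδ μ i hi (π i z) (hπmem i z)
    have hRHS : δ ε ⁅δ (1/ε) x, δ (1/ε) y⁆ = ∑ i ∈ Finset.Icc 1 s, ∑ j ∈ Finset.Icc 1 s,
        ∑ k ∈ Finset.Icc 1 s, (1/ε)^i • (1/ε)^j • ε^k • π k ⁅π i x, π j y⁆ := by
      rw [hδz (1/ε) x, hδz (1/ε) y, sum_lie', map_sum]
      refine Finset.sum_congr rfl fun i _ => ?_
      have step1 : ⁅(1/ε)^i • π i x, ∑ j ∈ Finset.Icc 1 s, (1/ε)^j • π j y⁆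
          = ∑ j ∈ Finset.Icc 1 s, (1/ε)^i • (1/ε)^j • ⁅π i x, π j y⁆ := by
        rw [smul_lie, lie_sum', Finset.smul_sum]
        exact Finset.sum_congr rfl fun j _ => by rw [lie_smul]
      rw [step1, map_sum]
      refine Finset.sum_congr rfl fun j _ => ?_
      rw [map_smul, map_smul, hδz ε ⁅π i x, π j y⁆, Finset.smul_sum, Finset.smul_sum]
    rw [hRHS]
    refine Finset.sum_congr rfl fun i hi => ?_
    refine Finset.sum_congr rfl fun j hj => ?_
    refine Finset.sum_congr rfl fun k hk => ?_
    simp only [Finset.mem_Icc] at hi hj hk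
    rcases Nat.lt_or_ge k (i + j) with hlt | hge
    · rw [hπbr i j hi.1 hj.1 (π i x) (hπmem i x) (π j y) (hπmem j y) k hlt]
      simp
    · rw [smul_smul, smul_smul]
      congr 1
      rw [pow_sub₀ ε hε hge, pow_add, mul_inv, one_div, inv_pow, inv_pow]
      ring
  · -- polynomial in ε
    intro x y
    refine ⟨s + 1, fun n => ∑ i ∈ Finset.Icc 1 s, ∑ j ∈ Finset.Icc 1 s, ∑ k ∈ Finset.Icc 1 s,
      if k - (i + j) = n then π k ⁅π i x, π j y⁆ else 0, fun ε => ?_⟩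
    rw [hB]
    symm
    calc ∑ n ∈ Finset.range (s+1), ε ^ n • ∑ i ∈ Finset.Icc 1 s, ∑ j ∈ Finset.Icc 1 s,
          ∑ k ∈ Finset.Icc 1 s, (if k - (i + j) = n then π k ⁅π i x, π j y⁆ else 0)
        = ∑ n ∈ Finset.range (s+1), ∑ i ∈ Finset.Icc 1 s, ∑ j ∈ Finset.Icc 1 s,
          ∑ k ∈ Finset.Icc 1 s, (if k - (i + j) = n then ε ^ n • π k ⁅π i x, π j y⁆ else 0) := by
          refine Finset.sum_congr rfl fun n _ => ?_
          rw [Finset.smul_sum]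
          refine Finset.sum_congr rfl fun i _ => ?_
          rw [Finset.smul_sum]
          refine Finset.sum_congr rfl fun j _ => ?_
          rw [Finset.smul_sum]
          refine Finset.sum_congr rfl fun k _ => ?_
          split <;> simp
      _ = ∑ i ∈ Finset.Icc 1 s, ∑ j ∈ Finset.Icc 1 s, ∑ k ∈ Finset.Icc 1 s,
          ∑ n ∈ Finset.range (s+1), (if k - (i + j) = n then ε ^ n • π k ⁅π i x, π j y⁆ else 0) := by
          rw [Finset.sum_comm]
          refine Finset.sum_congr rfl fun i _ => ?_
          rw [Finset.sum_comm]
          refine Finset.sum_congr rfl fun j _ => ?_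
          rw [Finset.sum_comm]
      _ = ∑ i ∈ Finset.Icc 1 s, ∑ j ∈ Finset.Icc 1 s, ∑ k ∈ Finset.Icc 1 s,
          ε ^ (k - (i + j)) • π k ⁅π i x, π j y⁆ := by
          refine Finset.sum_congr rfl fun i _ => ?_
          refine Finset.sum_congr rfl fun j _ => ?_
          refine Finset.sum_congr rfl fun k hk => ?_
          rw [Finset.sum_ite_eq (Finset.range (s+1)) (k - (i+j)) (fun n => ε ^ n • π k ⁅π i x, π j y⁆)]
          simp only [Finset.mem_Icc] at hk
          rw [if_pos (Finset.mem_range.mpr (by omega))]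
  · -- value at 0
    intro i hi j hj v hv w hw
    rw [hB]
    simp only [Finset.mem_Icc] at hi hj
    rw [Finset.sum_eq_single i]
    rotate_left
    · intro i' _ hne
      rw [hπV i i' hne v hv]
      simp
    · intro h
      exact absurd (Finset.mem_Icc.mpr hi) h
    rw [Finset.sum_eq_single j]
    rotate_left
    · intro j' _ hne
      rw [hπV j j' hne w hw]
      simp
    · intro h
      exact absurd (Finset.mem_Icc.mpr hj) h
    rw [hπid i v hv, hπid j w hw]
    rcases Nat.lt_or_ge s (i + j) with hbig | hle
    · -- i + j > s : bracket is zero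
      have hbw : ⁅v, w⁆ = 0 := by
        have := bracket_mem_lcs (i := i) (j := j) (by omega) (by omega)
          (hVle i (by omega) hv) (hVle j (by omega) hw)
        rwa [hlcs_bot (i+j) (by omega), Submodule.mem_bot] at this
      rw [hbw]
      simp
    · rw [Finset.sum_eq_single (i + j)]
      rotate_left
      · intro k hk hne
        simp only [Finset.mem_Icc] at hk
        rcases Nat.lt_or_ge k (i + j) with hlt | hge
        · rw [hπbr i j (by omega) (by omega) v hv w hw k hlt]
          simp
        · rw [zero_pow (by omega : k - (i + j) ≠ 0)]
          simp
      · intro h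
        exact absurd (Finset.mem_Icc.mpr ⟨by omega, hle⟩) h
      rw [Nat.sub_self, pow_zero, one_smul]
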